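/- For all integers n ≥ 1 and k ≥ 1, the Lucas–Coxeter–Fuss–Catalan analogue for the Coxeter group B_n satisfies Π_{i=1}^{n} {2kn+2i}/{2i} = {(k+1)n:2 choose n:2}_L, and in particular it is a polynomial in s and t all of whose coefficients are nonnegative integers. (Formally: Π_{i=1}^{n} {2kn+2i} · {kn:2}! = {(k+1)n:2}!, and {n:2}!·{kn:2}! divides {(k+1)n:2}! with quotient having nonnegative coefficients.) -/

import Mathlib

open MvPolynomial Finset
set_option synthInstance.maxHeartbeats 1000000
set_option maxHeartbeats 1000000

noncomputable section

/-- Polynomial ring ℤ[s,t] with s = X 0, t = X 1. -/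
abbrev P2 : Type := MvPolynomial (Fin 2) ℤ

def ps : P2 := X 0
def pt : P2 := X 1

/-- The Lucas sequence of polynomials: {0}=0, {1}=1, {n}=s{n-1}+t{n-2}. -/
def lucas : ℕ → P2
  | 0 => 0
  | 1 => 1
  | (n+2) => ps * lucas (n+1) + pt * lucas n

/-- The Lucastorial {n}! = {1}{2}⋯{n}. -/
def lucasFact (n : ℕ) : P2 := ∏ i ∈ Finset.range n, lucas (i+1)

/-- The d-divisible Lucastorial {n:d}! = {d}{2d}⋯{nd}. -/
def lucasFactD (d n : ℕ) : P2 := ∏ i ∈ Finset.range n, lucas (d*(i+1))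

/-- A polynomial lies in ℕ[s,t]: all coefficients are nonnegative. -/
def Nonneg (p : P2) : Prop := ∀ m, 0 ≤ p.coeff m

/-- The fraction field ℤ(s,t). -/
abbrev K : Type := FractionRing P2

def φ : P2 →+* K := algebraMap P2 K

def L (n : ℕ) : K := φ (lucas n)

def LFact (n : ℕ) : K := φ (lucasFact n)

def LFactD (d n : ℕ) : K := φ (lucasFactD d n)

/-- The Lucasnomial {n choose k}, as an element of the fraction field. -/
def lnom (n k : ℕ) : K := LFact n / (LFact k * LFact (n-k))

/-- The d-divisible Lucasnomial {n:d choose k:d}, as an element of the fraction field. -/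
def lnomD (d n k : ℕ) : K := LFactD d n / (LFactD d k * LFactD d (n-k))

/-- The Lucas-Catalan number C_{n} = (1/{n+1}) {2n choose n}. -/
def catL (n : ℕ) : K := lnom (2*n) n / L (n+1)

/-- The Lucas-Fuss-Catalan number C_{n,k} = (1/{kn+1}) {(k+1)n choose n}. -/
def fussCatL (n k : ℕ) : K := lnom ((k+1)*n) n / L (k*n+1)

lemma nonneg_one : Nonneg 1 := by
  intro m
  classical
  rw [MvPolynomial.coeff_one]
  split <;> norm_num

lemma nonneg_add {p q : P2} (hp : Nonneg p) (hq : Nonneg q) : Nonneg (p + q) := by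
  intro m; rw [MvPolynomial.coeff_add]; exact add_nonneg (hp m) (hq m)

lemma nonneg_mul {p q : P2} (hp : Nonneg p) (hq : Nonneg q) : Nonneg (p * q) := by
  intro m
  classical
  rw [MvPolynomial.coeff_mul]
  exact Finset.sum_nonneg fun x _ => mul_nonneg (hp x.1) (hq x.2)

lemma nonneg_X (i : Fin 2) : Nonneg (X i : P2) := by
  intro m
  classical
  rw [MvPolynomial.coeff_X']
  split <;> norm_num

lemma nonneg_lucas (n : ℕ) : Nonneg (lucas n) := by
  induction n using Nat.twoStepInduction with
  | zero => intro m; simp [lucas]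
  | one => exact nonneg_one
  | more n ih1 ih2 =>
    show Nonneg (ps * lucas (n+1) + pt * lucas n)
    exact nonneg_add (nonneg_mul (nonneg_X 0) ih2) (nonneg_mul (nonneg_X 1) ih1)

lemma lucas_addition (m : ℕ) : ∀ n : ℕ,
    lucas (m + n + 1) = lucas (m + 1) * lucas (n + 1) + pt * (lucas m * lucas n) := by
  induction m using Nat.twoStepInduction with
  | zero => intro n; simp [lucas]
  | one =>
    intro n
    have l2 : lucas 2 = ps := by
      show ps * lucas 1 + pt * lucas 0 = ps
      simp [lucas]
    rw [show (1:ℕ) + n + 1 = n + 2 by omega, show (1:ℕ) + 1 = 2 from rfl, l2]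
    show ps * lucas (n+1) + pt * lucas n = ps * lucas (n+1) + pt * (lucas 1 * lucas n)
    simp [lucas]
  | more m ih1 ih2 =>
    intro n
    have h1 : m + 2 + n + 1 = (m + n + 1) + 2 := by omega
    have h2 : m + 1 + n + 1 = (m + n) + 2 := by omega
    rw [h1]
    show ps * lucas (m + n + 1 + 1) + pt * lucas (m + n + 1) = _
    have e2 : lucas (m + n + 1 + 1) = lucas (m + 2) * lucas (n + 1) + pt * (lucas (m+1) * lucas n) := by
      have := ih2 n; rw [h2] at this
      have h3 : m + n + 1 + 1 = m + n + 2 := by omega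
      rw [h3, this]
    rw [e2, ih1 n]
    show _ = lucas (m + 3) * lucas (n+1) + pt * (lucas (m+2) * lucas n)
    show _ = (ps * lucas (m+2) + pt * lucas (m+1)) * lucas (n+1) + pt * ((ps * lucas (m+1) + pt * lucas m) * lucas n)
    ring

def evZ : P2 →+* ℤ := MvPolynomial.eval (fun i : Fin 2 => if i = 0 then 1 else 0)

lemma evZ_lucas (n : ℕ) : evZ (lucas (n + 1)) = 1 := by
  induction n using Nat.twoStepInduction with
  | zero => simp [lucas, evZ]
  | one => show evZ (ps * lucas 1 + pt * lucas 0) = 1; simp [lucas, evZ, ps, pt]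
  | more n ih1 ih2 =>
    show evZ (ps * lucas (n+2) + pt * lucas (n+1)) = 1
    rw [map_add, map_mul, map_mul, ih1, ih2]
    simp [evZ, ps, pt]

lemma lucas_ne_zero {n : ℕ} (h : 1 ≤ n) : lucas n ≠ 0 := by
  obtain ⟨m, rfl⟩ := Nat.exists_eq_add_of_le h
  intro h0
  have := evZ_lucas m
  rw [Nat.add_comm 1 m] at h0
  rw [h0] at this
  simp at this

lemma lucasFactD_ne_zero {d : ℕ} (hd : 1 ≤ d) (n : ℕ) : lucasFactD d n ≠ 0 :=
  Finset.prod_ne_zero_iff.mpr fun i _ => lucas_ne_zero (Nat.one_le_iff_ne_zero.mpr (by positivity))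

lemma lucasFactD_succ (d n : ℕ) : lucasFactD d (n + 1) = lucas (d * (n + 1)) * lucasFactD d n := by
  rw [lucasFactD, Finset.prod_range_succ, mul_comm, lucasFactD]

/-- The key divisibility with nonnegative quotient. -/
lemma key (d : ℕ) (hd : 1 ≤ d) : ∀ n k, k ≤ n → ∃ p : P2, Nonneg p ∧
    lucasFactD d n = p * (lucasFactD d k * lucasFactD d (n - k)) := by
  intro n
  induction n with
  | zero =>
    intro k hk
    interval_cases k
    exact ⟨1, nonneg_one, by simp [lucasFactD]⟩
  | succ n ih =>
    intro k hk
    rcases Nat.eq_zero_or_pos k with rfl | hk1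
    · exact ⟨1, nonneg_one, by simp [lucasFactD]⟩
    rcases eq_or_lt_of_le hk with rfl | hk2
    · exact ⟨1, nonneg_one, by simp [lucasFactD]⟩
    have hkn : k ≤ n := by omega
    set j := n + 1 - k with hjdef
    have hj1 : 1 ≤ j := by omega
    obtain ⟨p1, hp1, e1⟩ := ih k hkn
    obtain ⟨p2, hp2, e2⟩ := ih (k - 1) (by omega)
    have hnk : n - k = j - 1 := by omega
    have hnk2 : n - (k - 1) = j := by omega
    rw [hnk] at e1
    rw [hnk2] at e2
    refine ⟨lucas (d*k+1) * p1 + pt * lucas (d*j-1) * p2, nonneg_add (nonneg_mul (nonneg_lucas _) hp1) (nonneg_mul (nonneg_mul (nonneg_X 1) (nonneg_lucas _)) hp2), ?_⟩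
    have hdj : 1 ≤ d * j := Nat.one_le_iff_ne_zero.mpr (by positivity)
    have hL : lucas (d * (n+1)) = lucas (d*k+1) * lucas (d*j) + pt * (lucas (d*k) * lucas (d*j-1)) := by
      have := lucas_addition (d*k) (d*j - 1)
      have h1 : d*k + (d*j - 1) + 1 = d * (n+1) := by
        have : d * k + d * j = d * (n + 1) := by
          rw [← Nat.mul_add]; congr 1; omega
        omega
      have h2 : d*j - 1 + 1 = d*j := by omega
      rw [h1, h2] at this
      rw [this]
    have hjs : lucasFactD d j = lucas (d * j) * lucasFactD d (j - 1) := by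
      have := lucasFactD_succ d (j - 1)
      rw [show j - 1 + 1 = j by omega] at this
      exact this
    have hks : lucasFactD d k = lucas (d * k) * lucasFactD d (k - 1) := by
      have := lucasFactD_succ d (k - 1)
      rw [show k - 1 + 1 = k by omega] at this
      exact this
    calc lucasFactD d (n + 1) = lucas (d * (n+1)) * lucasFactD d n := lucasFactD_succ d n
      _ = lucas (d*k+1) * lucas (d*j) * lucasFactD d n
          + pt * lucas (d*k) * lucas (d*j-1) * lucasFactD d n := by rw [hL]; ring
      _ = lucas (d*k+1) * lucas (d*j) * (p1 * (lucasFactD d k * lucasFactD d (j-1)))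
          + pt * lucas (d*k) * lucas (d*j-1) * (p2 * (lucasFactD d (k-1) * lucasFactD d j)) := by
            rw [← e1, ← e2]
      _ = (lucas (d*k+1) * p1 + pt * lucas (d*j-1) * p2) * (lucasFactD d k * lucasFactD d j) := by
            rw [hjs, hks]; ring

lemma phi_ne_zero {p : P2} (hp : p ≠ 0) : φ p ≠ 0 := fun h =>
  hp (IsFractionRing.to_map_eq_zero_iff.mp h)

/-- for n, k ≥ 1,
Cat^{(k)} B_{n} = Π_{i=1}^{n} {2kn+2i}/{2i} = {(k+1)n:2 choose n:2},
and {n:2}!{kn:2}! divides {(k+1)n:2}! with quotient in ℕ[s,t]. -/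
theorem coxeterFussCatalan_B (n k : ℕ) (hn : 1 ≤ n) (hk : 1 ≤ k) :
    (∏ i ∈ Finset.Icc 1 n, L (2*k*n+2*i) / L (2*i)) = lnomD 2 ((k+1)*n) n ∧
    ∃ p : P2, Nonneg p ∧
      lucasFactD 2 ((k+1)*n) = p * (lucasFactD 2 n * lucasFactD 2 (k*n)) := by
  have hNkn : (k+1)*n = k*n + n := by ring
  have hsub : (k+1)*n - n = k*n := by omega
  constructor
  · have hIcc : ∀ f : ℕ → K, ∏ i ∈ Finset.Icc 1 n, f i = ∏ i ∈ Finset.range n, f (1+i) := by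
      intro f
      rw [← Finset.Ico_add_one_right_eq_Icc, Finset.prod_Ico_eq_prod_range]
      norm_num
    have hA : lucasFactD 2 (k*n + n)
        = lucasFactD 2 (k*n) * ∏ i ∈ Finset.range n, lucas (2*(k*n + i + 1)) := by
      rw [lucasFactD, lucasFactD, Finset.prod_range_add]
    have hnum : (∏ i ∈ Finset.range n, L (2*k*n + 2*(1+i)))
        = φ (∏ i ∈ Finset.range n, lucas (2*(k*n + i + 1))) := by
      rw [map_prod]
      exact Finset.prod_congr rfl fun i _ => by rw [L]; congr 1; ring
    have hden : (∏ i ∈ Finset.range n, L (2*(1+i))) = φ (lucasFactD 2 n) := by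
      rw [lucasFactD, map_prod]
      exact Finset.prod_congr rfl fun i _ => by rw [L]; congr 1; ring
    rw [Finset.prod_div_distrib, hIcc (fun i => L (2*k*n+2*i)), hIcc (fun i => L (2*i))]
    rw [hnum, hden, lnomD, hsub, LFactD, LFactD, LFactD, hNkn, hA, map_mul]
    have h1 : φ (lucasFactD 2 n) ≠ 0 := phi_ne_zero (lucasFactD_ne_zero one_le_two n)
    have h2 : φ (lucasFactD 2 (k*n)) ≠ 0 := phi_ne_zero (lucasFactD_ne_zero one_le_two (k*n))
    field_simp
  · obtain ⟨p, hp, e⟩ := key 2 one_le_two ((k+1)*n) n (by nlinarith)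
    rw [hsub] at e
    exact ⟨p, hp, e⟩
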